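/- Full-state lower quadratic bound following from Lemma 2: for every x ∈ ℝⁿ and every piecewise continuous φ : [-h,0) → ℝʳ, v(x, φ) ≥ (min{m_x, m_u}/2) (‖x‖² + ‖φ‖²), where m_u = e^{-σh} λ_min(W''), m_x = λ_min( (V⁻¹ + m_u⁻¹ G)⁻¹ ), G = ∫_{-h}^0 Q(θ) Q(θ)ᵀ dθ, and ‖φ‖² = ∫_{-h}^0 ‖φ(θ)‖² dθ. -/

import Mathlib

open scoped Matrix.Norms.L2Operator
open Matrix MeasureTheory
open scoped Pointwise

/-- Minimal eigenvalue of a (symmetric) real matrix, as the infimum of its real spectrum. -/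
noncomputable def lamMin {n : ℕ} (M : Matrix (Fin n) (Fin n) ℝ) : ℝ := sInf (spectrum ℝ M)

/-- Maximal eigenvalue of a (symmetric) real matrix, as the supremum of its real spectrum. -/
noncomputable def lamMax {n : ℕ} (M : Matrix (Fin n) (Fin n) ℝ) : ℝ := sSup (spectrum ℝ M)

/-- `f` is piecewise continuous on `s ⊆ ℝ`: continuous within `s` away from a finite
exceptional set, and bounded on `s`. -/
def PiecewiseContinuousOn {E : Type*} [NormedAddCommGroup E] (f : ℝ → E) (s : Set ℝ) : Prop :=
  ∃ t : Finset ℝ, (∀ x ∈ s \ (t : Set ℝ), ContinuousWithinAt f s x) ∧ ∃ C, ∀ x ∈ s, ‖f x‖ ≤ C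

/- ### Auxiliary lemmas -/

lemma lamMin_mul_dot {n : ℕ} {M : Matrix (Fin n) (Fin n) ℝ} (hM : M.IsHermitian)
    (x : Fin n → ℝ) : lamMin M * (x ⬝ᵥ x) ≤ x ⬝ᵥ M.mulVec x := by
  rcases Nat.eq_zero_or_pos n with hn | hn
  · subst hn; simp [dotProduct]
  have : Nonempty (Fin n) := ⟨⟨0, hn⟩⟩
  set c := lamMin M with hc
  have hcle : ∀ lam ∈ spectrum ℝ M, c ≤ lam := fun lam hlam =>
    csInf_le Matrix.finite_real_spectrum.bddBelow hlam
  have hMc : (M - c • (1 : Matrix (Fin n) (Fin n) ℝ)).IsHermitian := by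
    rw [Matrix.IsHermitian, Matrix.conjTranspose_sub, Matrix.conjTranspose_smul, hM.eq,
      Matrix.conjTranspose_one, star_trivial]
  have heig : ∀ i, 0 ≤ hMc.eigenvalues i := by
    intro i
    have hmem := hMc.eigenvalues_mem_spectrum_real i
    have hsp : spectrum ℝ (M - c • (1 : Matrix (Fin n) (Fin n) ℝ)) = spectrum ℝ M - ({c} : Set ℝ) := by
      rw [spectrum.sub_singleton_eq, Algebra.algebraMap_eq_smul_one]
    rw [hsp] at hmem
    obtain ⟨lam, hlam, b, hb, hval⟩ := hmem
    rw [Set.mem_singleton_iff] at hb; subst hb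
    have hle := hcle lam hlam
    simp only at hval
    linarith [hval]
  have hpsd := hMc.posSemidef_iff_eigenvalues_nonneg.2 heig
  have h0 := hpsd.dotProduct_mulVec_nonneg x
  simp only [star_trivial] at h0
  rw [Matrix.sub_mulVec, Matrix.smul_mulVec, Matrix.one_mulVec,
    dotProduct_sub, dotProduct_smul] at h0
  simp only [smul_eq_mul] at h0
  linarith

lemma lamMin_pos {n : ℕ} (hn : 0 < n) {M : Matrix (Fin n) (Fin n) ℝ} (hM : M.PosDef) :
    0 < lamMin M := by
  have : Nonempty (Fin n) := ⟨⟨0, hn⟩⟩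
  have hne : (spectrum ℝ M).Nonempty :=
    ⟨_, hM.1.eigenvalues_mem_spectrum_real (Classical.arbitrary _)⟩
  have hmem := hne.csInf_mem Matrix.finite_real_spectrum
  have hmem' : sInf (spectrum ℝ M) ∈ Set.range hM.1.eigenvalues :=
    hM.1.spectrum_real_eq_range_eigenvalues ▸ hmem
  obtain ⟨i, hi⟩ := hmem'
  rw [lamMin, ← hi]
  exact hM.eigenvalues_pos i

lemma lamMax_pos {n : ℕ} (hn : 0 < n) {M : Matrix (Fin n) (Fin n) ℝ} (hM : M.PosDef) :
    0 < lamMax M := by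
  have : Nonempty (Fin n) := ⟨⟨0, hn⟩⟩
  have hne : (spectrum ℝ M).Nonempty :=
    ⟨_, hM.1.eigenvalues_mem_spectrum_real (Classical.arbitrary _)⟩
  have hmem := hne.csSup_mem Matrix.finite_real_spectrum
  have hmem' : sSup (spectrum ℝ M) ∈ Set.range hM.1.eigenvalues :=
    hM.1.spectrum_real_eq_range_eigenvalues ▸ hmem
  obtain ⟨i, hi⟩ := hmem'
  rw [lamMax, ← hi]
  exact hM.eigenvalues_pos i

lemma lamMin_dim_zero (M : Matrix (Fin 0) (Fin 0) ℝ) : lamMin M = 0 := by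
  haveI : Subsingleton (Matrix (Fin 0) (Fin 0) ℝ) := ⟨fun a b => by ext i j; exact i.elim0⟩
  rw [lamMin, Set.eq_empty_of_forall_notMem
    (fun a ha => (spectrum.mem_iff.1 ha) (isUnit_of_subsingleton _)), Real.sInf_empty]

lemma pc_aesm {E : Type*} [NormedAddCommGroup E] {f : ℝ → E} {s : Set ℝ}
    (hf : PiecewiseContinuousOn f s) (hs : MeasurableSet s) :
    AEStronglyMeasurable f (volume.restrict s) := by
  obtain ⟨t, hcont, -⟩ := hf
  have hts : volume (t : Set ℝ) = 0 := t.finite_toSet.countable.measure_zero _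
  have hae : s =ᵐ[volume] s \ (t : Set ℝ) := by
    refine Filter.eventuallyEq_set.2 ?_
    filter_upwards [measure_eq_zero_iff_ae_notMem.mp hts] with x hx
    exact ⟨fun hxs => ⟨hxs, hx⟩, fun hd => hd.1⟩
  have hcont' : ContinuousOn f (s \ (t : Set ℝ)) := fun x hx => (hcont x hx).mono Set.diff_subset
  have h2 : AEStronglyMeasurable f (volume.restrict (s \ (t : Set ℝ))) :=
    hcont'.aestronglyMeasurable (hs.diff t.finite_toSet.measurableSet)
  rw [Measure.restrict_congr_set hae]; exact h2

lemma intervalIntegral_eq_Ico {E : Type*} [NormedAddCommGroup E] [NormedSpace ℝ E]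
    {a b : ℝ} (hab : a ≤ b) (g : ℝ → E) :
    ∫ x in a..b, g x = ∫ x, g x ∂(volume.restrict (Set.Ico a b)) := by
  rw [intervalIntegral.integral_of_le hab,
    Measure.restrict_congr_set (Ioc_ae_eq_Icc.trans Ico_ae_eq_Icc.symm)]

lemma integrableOn_comp_pair {E F G' : Type*} [NormedAddCommGroup E] [NormedAddCommGroup F]
    [NormedAddCommGroup G'] [NormedSpace ℝ E] [NormedSpace ℝ F]
    [FiniteDimensional ℝ E] [FiniteDimensional ℝ F]
    (f : ℝ → E) (g : ℝ → F) {s : Set ℝ} (hs : MeasurableSet s) (hsvol : volume s < ⊤)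
    (hfm : AEStronglyMeasurable f (volume.restrict s))
    (hgm : AEStronglyMeasurable g (volume.restrict s))
    {Cf Cg : ℝ} (hCf : ∀ x ∈ s, ‖f x‖ ≤ Cf) (hCg : ∀ x ∈ s, ‖g x‖ ≤ Cg)
    (b : E × F → G') (hb : Continuous b) :
    IntegrableOn (fun θ => b (f θ, g θ)) s volume := by
  obtain ⟨C, hC⟩ := (((isCompact_closedBall (0:E) Cf).prod
    (isCompact_closedBall (0:F) Cg))).exists_bound_of_continuousOn hb.continuousOn
  refine Integrable.mono' (g := fun _ => C) (integrableOn_const hsvol.ne)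
    (hb.comp_aestronglyMeasurable (hfm.prodMk hgm)) ?_
  rw [ae_restrict_iff' hs]
  refine Filter.Eventually.of_forall fun θ hθ => ?_
  exact hC _ ⟨mem_closedBall_zero_iff.2 (hCf θ hθ), mem_closedBall_zero_iff.2 (hCg θ hθ)⟩

lemma dot_integral {k : ℕ} {μ : Measure ℝ} (y : Fin k → ℝ) {f : ℝ → Fin k → ℝ}
    (hf : Integrable f μ) : y ⬝ᵥ (∫ θ, f θ ∂μ) = ∫ θ, y ⬝ᵥ f θ ∂μ := by
  let L : (Fin k → ℝ) →ₗ[ℝ] ℝ :=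
    { toFun := fun v => y ⬝ᵥ v
      map_add' := fun u v => dotProduct_add y u v
      map_smul' := fun c v => by simp [dotProduct_smul] }
  have := (LinearMap.toContinuousLinearMap L).integral_comp_comm hf
  simpa [L] using this.symm

lemma dotmul_integral {k l : ℕ} {μ : Measure ℝ} (y : Fin k → ℝ) (y' : Fin l → ℝ)
    {f : ℝ → Matrix (Fin k) (Fin l) ℝ} (hf : Integrable f μ) :
    y ⬝ᵥ (∫ θ, f θ ∂μ).mulVec y' = ∫ θ, y ⬝ᵥ (f θ).mulVec y' ∂μ := by
  let L : Matrix (Fin k) (Fin l) ℝ →ₗ[ℝ] ℝ :=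
    { toFun := fun M => y ⬝ᵥ M.mulVec y'
      map_add' := fun M M' => by simp [Matrix.add_mulVec, dotProduct_add]
      map_smul' := fun c M => by simp [Matrix.smul_mulVec, dotProduct_smul] }
  have := (LinearMap.toContinuousLinearMap L).integral_comp_comm hf
  simpa [L] using this.symm

lemma transpose_integral {k l : ℕ} {μ : Measure ℝ} {f : ℝ → Matrix (Fin k) (Fin l) ℝ}
    (hf : Integrable f μ) : (∫ θ, f θ ∂μ)ᵀ = ∫ θ, (f θ)ᵀ ∂μ := by
  let L : Matrix (Fin k) (Fin l) ℝ →ₗ[ℝ] Matrix (Fin l) (Fin k) ℝ :=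
    { toFun := fun M => Mᵀ
      map_add' := fun M M' => Matrix.transpose_add M M'
      map_smul' := fun c M => Matrix.transpose_smul c M }
  have := (LinearMap.toContinuousLinearMap L).integral_comp_comm hf
  simpa [L] using this.symm

lemma dot_self_nonneg' {k : ℕ} (v : Fin k → ℝ) : 0 ≤ v ⬝ᵥ v :=
  Finset.sum_nonneg fun i _ => mul_self_nonneg _

lemma dot_expand {k : ℕ} (t : ℝ) (u v : Fin k → ℝ) :
    (t • u + v) ⬝ᵥ (t • u + v) = t * t * (u ⬝ᵥ u) + 2 * t * (u ⬝ᵥ v) + v ⬝ᵥ v := by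
  simp only [add_dotProduct, dotProduct_add, smul_dotProduct,
    dotProduct_smul, smul_eq_mul, dotProduct_comm v u]
  ring

lemma Q_bound_meas {n r N : ℕ}
    (A : Matrix (Fin n) (Fin n) ℝ) (B : Fin N → Matrix (Fin n) (Fin r) ℝ)
    (hd : Fin N → ℝ) (hint : ℝ)
    (Bint : ℝ → Matrix (Fin n) (Fin r) ℝ)
    (hBint : PiecewiseContinuousOn Bint (Set.Icc (-hint) 0))
    (h : ℝ)
    (Q : ℝ → Matrix (Fin n) (Fin r) ℝ)
    (hQ : ∀ θ ∈ Set.Icc (-h) 0, Q θ =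
      (∑ i : Fin N, if -hd i ≤ θ then NormedSpace.exp ((-hd i - θ) • A) * B i else 0)
      + ∫ τ in Set.Ioc (-hint) θ, NormedSpace.exp ((τ - θ) • A) * Bint τ) :
    ∃ CQ, (∀ θ ∈ Set.Icc (-h) 0, ‖Q θ‖ ≤ CQ) ∧
      AEStronglyMeasurable Q (volume.restrict (Set.Icc (-h) 0)) := by
  classical
  have hBm : AEStronglyMeasurable Bint (volume.restrict (Set.Icc (-hint) 0)) :=
    pc_aesm hBint measurableSet_Icc
  obtain ⟨tB, -, CB, hCB⟩ := hBint
  set Fi : ℝ → Matrix (Fin n) (Fin r) ℝ := fun τ => NormedSpace.exp (τ • A) * Bint τ with hFidef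
  set F' : ℝ → Matrix (Fin n) (Fin r) ℝ := Set.indicator (Set.Ioc (-hint) 0) Fi with hF'def
  have hexpc : Continuous fun τ : ℝ => NormedSpace.exp (τ • A) :=
    (continuous_iff_continuousAt.2 fun x => (NormedSpace.exp_analytic (𝕂 := ℝ) x).continuousAt).comp (continuous_id.smul continuous_const)
  have hmulc : Continuous fun p : Matrix (Fin n) (Fin n) ℝ × Matrix (Fin n) (Fin r) ℝ =>
      p.1 * p.2 := continuous_fst.matrix_mul continuous_snd
  have hFim : AEStronglyMeasurable Fi (volume.restrict (Set.Icc (-hint) 0)) :=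
    hmulc.comp_aestronglyMeasurable ((hexpc.aestronglyMeasurable).prodMk hBm)
  have hF'm : AEStronglyMeasurable F' volume :=
    (aestronglyMeasurable_indicator_iff measurableSet_Ioc).2
      (hFim.mono_measure (Measure.restrict_mono Set.Ioc_subset_Icc_self le_rfl))
  obtain ⟨CE, hCE⟩ := (isCompact_Icc (a := -hint) (b := (0:ℝ))).exists_bound_of_continuousOn
    hexpc.continuousOn
  have hFibd : ∀ τ ∈ Set.Icc (-hint) 0, ‖Fi τ‖ ≤ max CE 0 * max CB 0 := by
    intro τ hτ
    calc ‖Fi τ‖ ≤ ‖NormedSpace.exp (τ • A)‖ * ‖Bint τ‖ := Matrix.l2_opNorm_mul _ _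
    _ ≤ max CE 0 * max CB 0 :=
      mul_le_mul ((hCE τ hτ).trans (le_max_left _ _)) ((hCB τ hτ).trans (le_max_left _ _))
        (norm_nonneg _) (le_max_right _ _)
  have hF'int : Integrable F' volume := by
    refine Integrable.mono'
      (g := Set.indicator (Set.Ioc (-hint) 0) fun _ => max CE 0 * max CB 0) ?_ hF'm ?_
    · rw [integrable_indicator_iff measurableSet_Ioc]
      exact integrableOn_const measure_Ioc_lt_top.ne
    · refine Filter.Eventually.of_forall fun τ => ?_
      by_cases hτ : τ ∈ Set.Ioc (-hint) 0
      · rw [hF'def, Set.indicator_of_mem hτ, Set.indicator_of_mem hτ]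
        exact hFibd τ (Set.Ioc_subset_Icc_self hτ)
      · simp [hF'def, Set.indicator_of_notMem hτ]
  set P : ℝ → Matrix (Fin n) (Fin r) ℝ := fun θ => ∫ τ in (-hint)..θ, F' τ with hPdef
  have hPc : Continuous P :=
    intervalIntegral.continuous_primitive (fun a b => hF'int.intervalIntegrable) _
  have hIpart : ∀ θ ∈ Set.Icc (-h) 0,
      (∫ τ in Set.Ioc (-hint) θ, NormedSpace.exp ((τ - θ) • A) * Bint τ)
        = NormedSpace.exp ((-θ) • A) * P θ := by
    intro θ hθ
    rcases le_or_gt (-hint) θ with hθ1 | hθ1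
    · have h1 : P θ = ∫ τ in Set.Ioc (-hint) θ, F' τ := intervalIntegral.integral_of_le hθ1
      let L : Matrix (Fin n) (Fin r) ℝ →ₗ[ℝ] Matrix (Fin n) (Fin r) ℝ :=
        { toFun := fun X => NormedSpace.exp ((-θ) • A) * X
          map_add' := fun X Y => Matrix.mul_add _ X Y
          map_smul' := fun c X => by simp [Matrix.mul_smul] }
      have hpull := (LinearMap.toContinuousLinearMap L).integral_comp_comm
        (hF'int.integrableOn (s := Set.Ioc (-hint) θ))
      have step1 : (∫ τ in Set.Ioc (-hint) θ, NormedSpace.exp ((τ - θ) • A) * Bint τ)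
          = ∫ τ in Set.Ioc (-hint) θ, NormedSpace.exp ((-θ) • A) * F' τ := by
        refine setIntegral_congr_fun measurableSet_Ioc fun τ hτ => ?_
        have hτ' : τ ∈ Set.Ioc (-hint) 0 := ⟨hτ.1, hτ.2.trans hθ.2⟩
        have hc : Commute ((-θ) • A) (τ • A) :=
          Commute.smul_left ((Commute.refl A).smul_right τ) (-θ)
        rw [hF'def, Set.indicator_of_mem hτ', hFidef]
        show NormedSpace.exp ((τ - θ) • A) * Bint τ
          = NormedSpace.exp ((-θ) • A) * (NormedSpace.exp (τ • A) * Bint τ)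
        rw [← Matrix.mul_assoc, ← Matrix.exp_add_of_commute _ _ hc]
        congr 2
        rw [← add_smul]
        congr 1
        ring
      rw [step1, h1]
      have hL : (∫ τ in Set.Ioc (-hint) θ, NormedSpace.exp ((-θ) • A) * F' τ)
          = ∫ τ in Set.Ioc (-hint) θ, (LinearMap.toContinuousLinearMap L) (F' τ) := rfl
      rw [hL, hpull]
      rfl
    · have h2 : Set.Ioc (-hint) θ = ∅ := Set.Ioc_eq_empty (by linarith)
      have h3 : P θ = 0 := by
        rw [hPdef]
        show (∫ τ in (-hint)..θ, F' τ) = 0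
        rw [intervalIntegral.integral_symm, intervalIntegral.integral_of_le hθ1.le]
        have hzero : (∫ τ in Set.Ioc θ (-hint), F' τ)
            = ∫ τ in Set.Ioc θ (-hint), (0 : Matrix (Fin n) (Fin r) ℝ) := by
          refine setIntegral_congr_fun measurableSet_Ioc fun τ hτ => ?_
          rw [hF'def]
          exact Set.indicator_of_notMem (fun hmem => absurd hmem.1 (not_lt.2 hτ.2)) _
        rw [hzero]
        simp
      rw [h2, h3]
      simp
  set Qc : ℝ → Matrix (Fin n) (Fin r) ℝ := fun θ =>
    (∑ i : Fin N, Set.indicator (Set.Ici (-hd i))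
        (fun θ' => NormedSpace.exp ((-hd i - θ') • A) * B i) θ)
      + NormedSpace.exp ((-θ) • A) * P θ with hQcdef
  have hic : ∀ i : Fin N, Continuous fun θ' : ℝ => NormedSpace.exp ((-hd i - θ') • A) * B i :=
    fun i => ((continuous_iff_continuousAt.2 fun x => (NormedSpace.exp_analytic (𝕂 := ℝ) x).continuousAt).comp
      ((continuous_const.sub continuous_id).smul continuous_const)).matrix_mul continuous_const
  have hgc : Continuous fun θ : ℝ => NormedSpace.exp ((-θ) • A) * P θ :=
    ((continuous_iff_continuousAt.2 fun x => (NormedSpace.exp_analytic (𝕂 := ℝ) x).continuousAt).comp (continuous_neg.smul continuous_const)).matrix_mul hPc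
  have hQeq : ∀ θ ∈ Set.Icc (-h) 0, Q θ = Qc θ := by
    intro θ hθ
    have hsum : (∑ i : Fin N, if -hd i ≤ θ then NormedSpace.exp ((-hd i - θ) • A) * B i else 0)
        = ∑ i : Fin N, Set.indicator (Set.Ici (-hd i))
            (fun θ' => NormedSpace.exp ((-hd i - θ') • A) * B i) θ := by
      refine Finset.sum_congr rfl fun i _ => ?_
      by_cases hih : -hd i ≤ θ
      · rw [if_pos hih, Set.indicator_of_mem (Set.mem_Ici.2 hih)]
      · rw [if_neg hih, Set.indicator_of_notMem (fun hm => hih (Set.mem_Ici.1 hm))]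
    rw [hQ θ hθ, hIpart θ hθ, hsum]
  have hQcm : AEStronglyMeasurable Qc volume := by
    refine AEStronglyMeasurable.add ?_ hgc.aestronglyMeasurable
    refine Finset.aestronglyMeasurable_fun_sum _ fun i _ => ?_
    exact ((hic i).aestronglyMeasurable).indicator measurableSet_Ici
  have hibd : ∀ i : Fin N, ∃ Ci, ∀ θ ∈ Set.Icc (-h) 0,
      ‖NormedSpace.exp ((-hd i - θ) • A) * B i‖ ≤ Ci :=
    fun i => isCompact_Icc.exists_bound_of_continuousOn (hic i).continuousOn
  choose Cf hCf using hibd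
  obtain ⟨C2, hC2⟩ := (isCompact_Icc (a := -h) (b := (0:ℝ))).exists_bound_of_continuousOn
    hgc.continuousOn
  refine ⟨(∑ i : Fin N, max (Cf i) 0) + max C2 0, fun θ hθ => ?_, ?_⟩
  · rw [hQeq θ hθ, hQcdef]
    refine (norm_add_le _ _).trans (add_le_add ?_ ((hC2 θ hθ).trans (le_max_left _ _)))
    refine (norm_sum_le _ _).trans (Finset.sum_le_sum fun i _ => ?_)
    exact (norm_indicator_le_norm_self _ _).trans ((hCf i θ hθ).trans (le_max_left _ _))
  · exact (hQcm.restrict).congr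
      ((ae_restrict_iff' measurableSet_Icc).2
        (Filter.Eventually.of_forall fun θ hθ => (hQeq θ hθ).symm))

set_option maxHeartbeats 1600000

/-- Full-state lower quadratic bound following from Lemma 2:
`v(x,φ) ≥ (min{m_x, m_u}/2) (‖x‖² + ‖φ‖²)`. -/
theorem lyapunov_functional_lower_bound_full
    {n r N : ℕ}
    (A : Matrix (Fin n) (Fin n) ℝ)
    (B : Fin N → Matrix (Fin n) (Fin r) ℝ)
    (hd : Fin N → ℝ) (hd_nonneg : ∀ i, 0 ≤ hd i)
    (hint : ℝ) (hint_nonneg : 0 ≤ hint)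
    (Bint : ℝ → Matrix (Fin n) (Fin r) ℝ)
    (hBint : PiecewiseContinuousOn Bint (Set.Icc (-hint) 0))
    (h : ℝ) (hh1 : ∀ i, hd i ≤ h) (hh2 : hint ≤ h)
    (Q : ℝ → Matrix (Fin n) (Fin r) ℝ)
    (hQ : ∀ θ ∈ Set.Icc (-h) 0, Q θ =
      (∑ i : Fin N, if -hd i ≤ θ then NormedSpace.exp ((-hd i - θ) • A) * B i else 0)
      + ∫ τ in Set.Ioc (-hint) θ, NormedSpace.exp ((τ - θ) • A) * Bint τ)
    (F : Matrix (Fin r) (Fin n) ℝ)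
    (W1 : Matrix (Fin n) (Fin n) ℝ) (hW1 : W1.PosDef)
    (W2 : Matrix (Fin r) (Fin r) ℝ) (hW2 : W2.PosDef)
    (V : Matrix (Fin n) (Fin n) ℝ) (hV : V.PosDef)
    (hLyap : (A + Q 0 * F)ᵀ * V + V * (A + Q 0 * F) = -(W1 + (2 : ℝ) • (Fᵀ * W2 * F)))
    (σ : ℝ) (hσ : σ = lamMin W1 / lamMax V)
    (mu : ℝ) (hmu : mu = Real.exp (-σ * h) * lamMin W2)
    (G : Matrix (Fin n) (Fin n) ℝ) (hG : G = ∫ θ in (-h)..0, Q θ * (Q θ)ᵀ)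
    (mx : ℝ) (hmx : mx = lamMin ((V⁻¹ + mu⁻¹ • G)⁻¹)) :
    ∀ (x : Fin n → ℝ) (φ : ℝ → Fin r → ℝ),
      PiecewiseContinuousOn φ (Set.Ico (-h) 0) →
      (x + ∫ θ in (-h)..0, (Q θ).mulVec (φ θ)) ⬝ᵥ
          V.mulVec (x + ∫ θ in (-h)..0, (Q θ).mulVec (φ θ))
        + ∫ θ in (-h)..0, Real.exp (σ * θ) * (φ θ ⬝ᵥ W2.mulVec (φ θ))
      ≥ (min mx mu / 2) * (x ⬝ᵥ x + ∫ θ in (-h)..0, φ θ ⬝ᵥ φ θ) := by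
  intro x φ hφ
  classical
  have hh0 : (0:ℝ) ≤ h := hint_nonneg.trans hh2
  have hle : (-h : ℝ) ≤ 0 := by linarith
  have hRHS_nonneg : 0 ≤ ∫ θ in (-h)..0, φ θ ⬝ᵥ φ θ :=
    intervalIntegral.integral_nonneg hle fun u _ => dot_self_nonneg' _
  have hxx : 0 ≤ x ⬝ᵥ x := dot_self_nonneg' x
  have hLHS2_nonneg : 0 ≤ ∫ θ in (-h)..0, Real.exp (σ * θ) * (φ θ ⬝ᵥ W2.mulVec (φ θ)) :=
    intervalIntegral.integral_nonneg hle fun u _ =>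
      mul_nonneg (Real.exp_nonneg _) (by simpa using hW2.posSemidef.dotProduct_mulVec_nonneg (φ u))
  set z := x + ∫ θ in (-h)..0, (Q θ).mulVec (φ θ) with hzdef
  have hzVz : 0 ≤ z ⬝ᵥ V.mulVec z := by simpa using hV.posSemidef.dotProduct_mulVec_nonneg z
  rcases Nat.eq_zero_or_pos n with hn0 | hn
  · subst hn0
    have hx0 : x ⬝ᵥ x = 0 := by simp [dotProduct]
    have hz0 : z ⬝ᵥ V.mulVec z = 0 := by simp [dotProduct]
    have hmx0 : mx = 0 := hmx.trans (lamMin_dim_zero _)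
    have hmin : min mx mu ≤ 0 := le_trans (min_le_left _ _) (le_of_eq hmx0)
    nlinarith [hmin, hRHS_nonneg, hLHS2_nonneg, hz0, hx0]
  rcases Nat.eq_zero_or_pos r with hr0 | hr
  · subst hr0
    have hmu0 : mu = 0 := by rw [hmu, lamMin_dim_zero, mul_zero]
    have hmin : min mx mu ≤ 0 := le_trans (min_le_right _ _) (le_of_eq hmu0)
    nlinarith [hmin, hRHS_nonneg, hLHS2_nonneg, hzVz, hxx]
  -- main case
  have hσ0 : 0 ≤ σ := by
    rw [hσ]; exact (div_pos (lamMin_pos hn hW1) (lamMax_pos hn hV)).le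
  have hmupos : 0 < mu := by rw [hmu]; exact mul_pos (Real.exp_pos _) (lamMin_pos hr hW2)
  simp only [intervalIntegral_eq_Ico hle] at hzdef hG ⊢
  set s0 : Set ℝ := Set.Ico (-h) 0 with hs0def
  have hs0m : MeasurableSet s0 := measurableSet_Ico
  have hs0v : volume s0 < ⊤ := measure_Ico_lt_top
  have hφm : AEStronglyMeasurable φ (volume.restrict s0) := pc_aesm hφ hs0m
  obtain ⟨tφ, -, Cφ, hCφ⟩ := hφ
  obtain ⟨CQ, hCQ, hQmIcc⟩ := Q_bound_meas A B hd hint Bint hBint h Q hQ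
  have hQm : AEStronglyMeasurable Q (volume.restrict s0) :=
    hQmIcc.mono_measure (Measure.restrict_mono Set.Ico_subset_Icc_self le_rfl)
  have hCQ' : ∀ θ ∈ s0, ‖Q θ‖ ≤ CQ := fun θ hθ => hCQ θ (Set.Ico_subset_Icc_self hθ)
  have hint1 : IntegrableOn (fun θ => (Q θ).mulVec (φ θ)) s0 volume :=
    integrableOn_comp_pair Q φ hs0m hs0v hQm hφm hCQ' hCφ
      (fun p => p.1.mulVec p.2) (continuous_fst.matrix_mulVec continuous_snd)
  have hint2 : IntegrableOn (fun θ => Q θ * (Q θ)ᵀ) s0 volume :=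
    integrableOn_comp_pair Q Q hs0m hs0v hQm hQm hCQ' hCQ'
      (fun p => p.1 * p.2ᵀ) (continuous_fst.matrix_mul continuous_snd.matrix_transpose)
  have hexpσm : AEStronglyMeasurable (fun θ : ℝ => Real.exp (σ * θ)) (volume.restrict s0) :=
    (Real.continuous_exp.comp (continuous_const.mul continuous_id)).aestronglyMeasurable
  have hexpσbd : ∀ θ ∈ s0, ‖Real.exp (σ * θ)‖ ≤ 1 := by
    intro θ hθ
    rw [Real.norm_eq_abs, abs_of_pos (Real.exp_pos _)]
    calc Real.exp (σ * θ) ≤ Real.exp 0 :=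
        Real.exp_le_exp.2 (mul_nonpos_iff.2 (Or.inl ⟨hσ0, hθ.2.le⟩))
    _ = 1 := Real.exp_zero
  have hint3 : IntegrableOn (fun θ => Real.exp (σ * θ) * (φ θ ⬝ᵥ W2.mulVec (φ θ))) s0 volume :=
    integrableOn_comp_pair (fun θ : ℝ => Real.exp (σ * θ)) φ hs0m hs0v hexpσm hφm hexpσbd hCφ
      (fun p => p.1 * (p.2 ⬝ᵥ W2.mulVec p.2))
      (continuous_fst.mul (continuous_snd.dotProduct
        (continuous_const.matrix_mulVec continuous_snd)))
  have hint4 : IntegrableOn (fun θ => φ θ ⬝ᵥ φ θ) s0 volume :=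
    integrableOn_comp_pair φ φ hs0m hs0v hφm hφm hCφ hCφ
      (fun p => p.1 ⬝ᵥ p.2) (continuous_fst.dotProduct continuous_snd)
  -- G quadratic form
  have hGquad : ∀ y : Fin n → ℝ, y ⬝ᵥ G.mulVec y
      = ∫ θ, ((Q θ)ᵀ.mulVec y) ⬝ᵥ ((Q θ)ᵀ.mulVec y) ∂(volume.restrict s0) := by
    intro y
    rw [hG, dotmul_integral y y hint2]
    refine integral_congr_ae (Filter.Eventually.of_forall fun θ => ?_)
    show y ⬝ᵥ (Q θ * (Q θ)ᵀ).mulVec y = ((Q θ)ᵀ.mulVec y) ⬝ᵥ ((Q θ)ᵀ.mulVec y)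
    rw [← Matrix.mulVec_mulVec, Matrix.dotProduct_mulVec y (Q θ), ← Matrix.mulVec_transpose]
  have hGpsd : ∀ y, 0 ≤ y ⬝ᵥ G.mulVec y := fun y => by
    rw [hGquad y]; exact integral_nonneg fun θ => dot_self_nonneg' _
  have hGsym : Gᵀ = G := by
    rw [hG, transpose_integral hint2]
    refine integral_congr_ae (Filter.Eventually.of_forall fun θ => ?_)
    show (Q θ * (Q θ)ᵀ)ᵀ = Q θ * (Q θ)ᵀ
    rw [Matrix.transpose_mul, Matrix.transpose_transpose]
  set S := V⁻¹ + mu⁻¹ • G with hSdef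
  have hVinv : (V⁻¹).PosDef := hV.inv
  have hSherm : S.IsHermitian := by
    rw [Matrix.IsHermitian, hSdef, Matrix.conjTranspose_add, Matrix.conjTranspose_smul,
      hVinv.1.eq, Matrix.conjTranspose_eq_transpose_of_trivial, hGsym, star_trivial]
  have hSpd : S.PosDef := by
    refine Matrix.PosDef.of_dotProduct_mulVec_pos hSherm fun y hy => ?_
    have h1 := hVinv.dotProduct_mulVec_pos hy
    have h2 := hGpsd y
    simp only [star_trivial] at h1 ⊢
    rw [hSdef, Matrix.add_mulVec, dotProduct_add, Matrix.smul_mulVec,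
      dotProduct_smul, smul_eq_mul]
    have h3 : 0 ≤ mu⁻¹ * (y ⬝ᵥ G.mulVec y) := mul_nonneg (inv_nonneg.2 hmupos.le) h2
    linarith
  have hSinv : (S⁻¹).PosDef := hSpd.inv
  have hmxpos : 0 < mx := hmx ▸ lamMin_pos hn hSinv
  have hmxle : mx * (x ⬝ᵥ x) ≤ x ⬝ᵥ (S⁻¹).mulVec x := hmx ▸ lamMin_mul_dot hSinv.1 x
  set w := (S⁻¹).mulVec x with hwdef
  have hSdet : IsUnit S.det := isUnit_iff_ne_zero.2 hSpd.det_pos.ne'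
  have hVdet : IsUnit V.det := isUnit_iff_ne_zero.2 hV.det_pos.ne'
  have hSw : S.mulVec w = x := by
    rw [hwdef, Matrix.mulVec_mulVec, Matrix.mul_nonsing_inv _ hSdet, Matrix.one_mulVec]
  have hxw : x ⬝ᵥ (S⁻¹).mulVec x = w ⬝ᵥ x := by rw [← hwdef]; exact dotProduct_comm _ _
  have he1 : w ⬝ᵥ x = w ⬝ᵥ V⁻¹.mulVec w + mu⁻¹ * (w ⬝ᵥ G.mulVec w) := by
    conv_lhs => rw [← hSw]
    rw [hSdef, Matrix.add_mulVec, dotProduct_add, Matrix.smul_mulVec,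
      dotProduct_smul, smul_eq_mul]
  have hVsym : Vᵀ = V := by rw [← Matrix.conjTranspose_eq_transpose_of_trivial, hV.1.eq]
  have he2 : 2 * (w ⬝ᵥ z) ≤ w ⬝ᵥ V⁻¹.mulVec w + z ⬝ᵥ V.mulVec z := by
    have h0 := hVinv.posSemidef.dotProduct_mulVec_nonneg (w - V.mulVec z)
    simp only [star_trivial] at h0
    have t1 : V⁻¹.mulVec (V.mulVec z) = z := by
      rw [Matrix.mulVec_mulVec, Matrix.nonsing_inv_mul _ hVdet, Matrix.one_mulVec]
    have hv : V.mulVec z = Matrix.vecMul z V := by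
      rw [← Matrix.vecMul_transpose, hVsym]
    have t2 : (V.mulVec z) ⬝ᵥ V⁻¹.mulVec w = z ⬝ᵥ w := by
      rw [Matrix.dotProduct_mulVec, hv, Matrix.vecMul_vecMul,
        Matrix.mul_nonsing_inv _ hVdet, Matrix.vecMul_one]
    have expand : (w - V.mulVec z) ⬝ᵥ V⁻¹.mulVec (w - V.mulVec z)
        = w ⬝ᵥ V⁻¹.mulVec w - 2 * (w ⬝ᵥ z) + z ⬝ᵥ V.mulVec z := by
      rw [Matrix.mulVec_sub, sub_dotProduct, dotProduct_sub,
        dotProduct_sub, t1, t2]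
      have t3 : (V.mulVec z) ⬝ᵥ z = z ⬝ᵥ V.mulVec z := dotProduct_comm _ _
      have t4 : z ⬝ᵥ w = w ⬝ᵥ z := dotProduct_comm _ _
      rw [t3, t4]
      ring
    rw [expand] at h0
    linarith
  set fw := fun θ => (Q θ)ᵀ.mulVec w with hfwdef
  have hint5 : IntegrableOn (fun θ => fw θ ⬝ᵥ φ θ) s0 volume :=
    integrableOn_comp_pair Q φ hs0m hs0v hQm hφm hCQ' hCφ
      (fun p => (p.1ᵀ.mulVec w) ⬝ᵥ p.2)
      (((continuous_fst.matrix_transpose).matrix_mulVec continuous_const).dotProduct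
        continuous_snd)
  have hint6 : IntegrableOn (fun θ => fw θ ⬝ᵥ fw θ) s0 volume :=
    integrableOn_comp_pair Q Q hs0m hs0v hQm hQm hCQ' hCQ'
      (fun p => (p.1ᵀ.mulVec w) ⬝ᵥ (p.2ᵀ.mulVec w))
      (((continuous_fst.matrix_transpose).matrix_mulVec continuous_const).dotProduct
        ((continuous_snd.matrix_transpose).matrix_mulVec continuous_const))
  set q := ∫ θ, (Q θ).mulVec (φ θ) ∂(volume.restrict s0) with hqdef
  set c0 := ∫ θ, φ θ ⬝ᵥ φ θ ∂(volume.restrict s0) with hc0def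
  set I2 := ∫ θ, Real.exp (σ * θ) * (φ θ ⬝ᵥ W2.mulVec (φ θ)) ∂(volume.restrict s0) with hI2def
  have haq : w ⬝ᵥ q = ∫ θ, fw θ ⬝ᵥ φ θ ∂(volume.restrict s0) := by
    rw [hqdef, dot_integral w hint1]
    refine integral_congr_ae (Filter.Eventually.of_forall fun θ => ?_)
    show w ⬝ᵥ (Q θ).mulVec (φ θ) = ((Q θ)ᵀ.mulVec w) ⬝ᵥ φ θ
    rw [Matrix.dotProduct_mulVec, ← Matrix.mulVec_transpose]
  have hbw : w ⬝ᵥ G.mulVec w = ∫ θ, fw θ ⬝ᵥ fw θ ∂(volume.restrict s0) := hGquad w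
  have hquad : 0 ≤ mu⁻¹ * mu⁻¹ * (w ⬝ᵥ G.mulVec w) + 2 * mu⁻¹ * (w ⬝ᵥ q) + c0 := by
    have hnn : 0 ≤ ∫ θ, (mu⁻¹ • fw θ + φ θ) ⬝ᵥ (mu⁻¹ • fw θ + φ θ) ∂(volume.restrict s0) :=
      integral_nonneg fun θ => dot_self_nonneg' _
    have hpt : (fun θ => (mu⁻¹ • fw θ + φ θ) ⬝ᵥ (mu⁻¹ • fw θ + φ θ))
        = fun θ => (mu⁻¹ * mu⁻¹) * (fw θ ⬝ᵥ fw θ) + ((2 * mu⁻¹) * (fw θ ⬝ᵥ φ θ)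
            + (φ θ ⬝ᵥ φ θ)) := funext fun θ => by rw [dot_expand]; ring
    rw [hpt] at hnn
    have hgint : Integrable (fun θ => (2 * mu⁻¹) * (fw θ ⬝ᵥ φ θ) + (φ θ ⬝ᵥ φ θ))
        (volume.restrict s0) := (hint5.const_mul (2 * mu⁻¹)).add hint4
    have hfint : Integrable (fun θ => (mu⁻¹ * mu⁻¹) * (fw θ ⬝ᵥ fw θ))
        (volume.restrict s0) := hint6.const_mul (mu⁻¹ * mu⁻¹)
    have h5int : Integrable (fun θ => (2 * mu⁻¹) * (fw θ ⬝ᵥ φ θ))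
        (volume.restrict s0) := hint5.const_mul (2 * mu⁻¹)
    rw [integral_add hfint hgint, integral_add h5int hint4,
      integral_const_mul, integral_const_mul] at hnn
    rw [hbw, haq]
    linarith
  have he3 : -(2 * (w ⬝ᵥ q)) ≤ mu⁻¹ * (w ⬝ᵥ G.mulVec w) + mu * c0 := by
    have hne : mu ≠ 0 := hmupos.ne'
    have h4 := mul_nonneg hmupos.le hquad
    have h5 : mu * (mu⁻¹ * mu⁻¹ * (w ⬝ᵥ G.mulVec w) + 2 * mu⁻¹ * (w ⬝ᵥ q) + c0)
        = mu⁻¹ * (w ⬝ᵥ G.mulVec w) + 2 * (w ⬝ᵥ q) + mu * c0 := by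
      field_simp
    rw [h5] at h4
    linarith
  have hwz : w ⬝ᵥ z = w ⬝ᵥ x + w ⬝ᵥ q := by
    rw [hzdef, dotProduct_add]
  have hkey : mx * (x ⬝ᵥ x) ≤ z ⬝ᵥ V.mulVec z + mu * c0 := by
    rw [hxw] at hmxle
    linarith [he1, he2, he3, hwz, hmxle]
  have hI2low : mu * c0 ≤ I2 := by
    have hmono : ∫ θ in s0, mu * (φ θ ⬝ᵥ φ θ) ≤ ∫ θ in s0,
        Real.exp (σ * θ) * (φ θ ⬝ᵥ W2.mulVec (φ θ)) := by
      refine setIntegral_mono_on (hint4.const_mul mu) hint3 hs0m fun θ hθ => ?_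
      have e1 : Real.exp (-σ * h) ≤ Real.exp (σ * θ) :=
        Real.exp_le_exp.2 (by nlinarith [hθ.1, hσ0])
      have e2 : lamMin W2 * (φ θ ⬝ᵥ φ θ) ≤ φ θ ⬝ᵥ W2.mulVec (φ θ) := lamMin_mul_dot hW2.1 _
      have e3 : 0 ≤ lamMin W2 * (φ θ ⬝ᵥ φ θ) :=
        mul_nonneg (lamMin_pos hr hW2).le (dot_self_nonneg' _)
      calc mu * (φ θ ⬝ᵥ φ θ) = Real.exp (-σ * h) * (lamMin W2 * (φ θ ⬝ᵥ φ θ)) := by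
            rw [hmu]; ring
      _ ≤ Real.exp (σ * θ) * (φ θ ⬝ᵥ W2.mulVec (φ θ)) :=
            mul_le_mul e1 e2 e3 (Real.exp_pos _).le
    rw [integral_const_mul] at hmono
    exact hmono
  have hminx : min mx mu ≤ mx := min_le_left _ _
  have hminu : min mx mu ≤ mu := min_le_right _ _
  have hc0 : 0 ≤ c0 := integral_nonneg fun θ => dot_self_nonneg' _
  nlinarith [hkey, hI2low, hzVz, hxx, hc0,
    mul_le_mul_of_nonneg_right hminx hxx, mul_le_mul_of_nonneg_right hminu hc0]
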